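/- Let W be a connected graphon and ℒ its combinatorial Laplacian operator, (ℒf)(x) = k(x)f(x) − ∫₀¹ W(x,y) f(y) dy, where k(x) = ∫₀¹ W(x,y) dy. Then the kernel of ℒ is one-dimensional, spanned by the constant function 1. -/

import Mathlib

open MeasureTheory

/-- A graphon is connected if `∫_{U × Uᶜ} W > 0` for every measurable `U ⊆ [0,1]`
with `0 < μ(U) < 1` (complement taken inside `[0,1]`). -/
def GraphonConnected (W : ℝ → ℝ → ℝ) : Prop :=
  ∀ S : Set ℝ, MeasurableSet S → S ⊆ Set.Icc (0:ℝ) 1 →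
    0 < volume S → volume S < 1 →
    0 < ∫ x in S, ∫ y in Set.Icc (0:ℝ) 1 \ S, W x y

section Aux
open Set Filter

private lemma vol_I01' : volume (Set.Icc (0:ℝ) 1) = 1 := by
  rw [Real.volume_Icc]; norm_num

private lemma finite_restrict' {S : Set ℝ} (hS : S ⊆ Set.Icc (0:ℝ) 1) :
    IsFiniteMeasure (volume.restrict S) := by
  constructor
  rw [Measure.restrict_apply_univ]
  exact lt_of_le_of_lt (measure_mono hS) (by rw [vol_I01']; exact ENNReal.one_lt_top)

private lemma const_of_energy (W : ℝ → ℝ → ℝ)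
    (hmeas : Measurable fun p : ℝ × ℝ => W p.1 p.2)
    (h0 : ∀ x y, 0 ≤ W x y) (h1 : ∀ x y, W x y ≤ 1)
    (hconn : GraphonConnected W)
    (g : ℝ → ℝ) (hg : Measurable g)
    (hE : ∀ᵐ p ∂((volume.restrict (Set.Icc (0:ℝ) 1)).prod (volume.restrict (Set.Icc (0:ℝ) 1))),
      W p.1 p.2 * (g p.1 - g p.2)^2 = 0) :
    ∃ c : ℝ, ∀ᵐ x ∂(volume.restrict (Set.Icc (0:ℝ) 1)), g x = c := by
  set I := Set.Icc (0:ℝ) 1 with hI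
  set ν := volume.restrict I with hν
  set S : ℝ → Set ℝ := fun t => I ∩ {x | t < g x} with hS
  have hSm : ∀ t, MeasurableSet (S t) :=
    fun t => measurableSet_Icc.inter (measurableSet_lt measurable_const hg)
  have hSsub : ∀ t, S t ⊆ I := fun t => inter_subset_left
  have hvle : ∀ t, volume (S t) ≤ 1 :=
    fun t => le_trans (measure_mono (hSsub t)) vol_I01'.le
  have hmono : ∀ s t : ℝ, s ≤ t → S t ⊆ S s :=
    fun s t h x hx => ⟨hx.1, lt_of_le_of_lt h hx.2⟩
  have hWb : ∀ p : ℝ × ℝ, |W p.1 p.2| ≤ 1 :=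
    fun p => abs_le.2 ⟨by linarith [h0 p.1 p.2], h1 p.1 p.2⟩
  -- trichotomy
  have htri : ∀ t, volume (S t) = 0 ∨ volume (S t) = 1 := by
    intro t
    by_contra hcontra
    push_neg at hcontra
    have hpos : 0 < volume (S t) := pos_iff_ne_zero.2 hcontra.1
    have hlt : volume (S t) < 1 := lt_of_le_of_ne (hvle t) hcontra.2
    have hcon := hconn (S t) (hSm t) (hSsub t) hpos hlt
    set T := I \ S t with hT
    have hTm : MeasurableSet T := measurableSet_Icc.diff (hSm t)
    have hres : (volume.restrict (S t)).prod (volume.restrict T)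
        = (ν.prod ν).restrict ((S t) ×ˢ T) := by
      rw [← Measure.prod_restrict]
      congr 1
      · rw [hν, Measure.restrict_restrict (hSm t), inter_eq_left.2 (hSsub t)]
      · rw [hν, Measure.restrict_restrict hTm, inter_eq_left.2 diff_subset]
    have hWzero : ∀ᵐ p ∂((ν.prod ν).restrict ((S t) ×ˢ T)), W p.1 p.2 = 0 := by
      have hae := ae_restrict_of_ae (s := (S t) ×ˢ T) hE
      have hmem := ae_restrict_mem (μ := ν.prod ν) ((hSm t).prod hTm)
      filter_upwards [hae, hmem] with p hp hpm
      have h1' : t < g p.1 := hpm.1.2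
      have h2' : g p.2 ≤ t := by
        by_contra hgt
        exact hpm.2.2 ⟨hpm.2.1, not_le.1 hgt⟩
      have hne : g p.1 - g p.2 ≠ 0 := by linarith
      rcases mul_eq_zero.1 hp with h | h
      · exact h
      · exact absurd h (pow_ne_zero 2 hne)
    haveI : IsFiniteMeasure (volume.restrict (S t)) := finite_restrict' (hSsub t)
    haveI : IsFiniteMeasure (volume.restrict T) := finite_restrict' diff_subset
    have hWint : Integrable (fun p : ℝ × ℝ => W p.1 p.2)
        ((volume.restrict (S t)).prod (volume.restrict T)) := by
      refine (integrable_const (1:ℝ)).mono' hmeas.aestronglyMeasurable ?_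
      filter_upwards with p
      rw [Real.norm_eq_abs]
      simpa using hWb p
    have hint0 : (∫ x in S t, ∫ y in T, W x y) = 0 := by
      rw [← integral_prod _ hWint, hres]
      exact integral_eq_zero_of_ae hWzero
    rw [hint0] at hcon
    exact lt_irrefl 0 hcon
  -- exists t with measure 0
  have hZne : ∃ t : ℝ, volume (S t) = 0 := by
    by_contra hno
    push_neg at hno
    have hall : ∀ n : ℕ, volume (S n) = 1 :=
      fun n => (htri n).resolve_left (hno n)
    have hempty : ⋂ n : ℕ, S (n : ℝ) = ∅ := by
      ext x
      simp only [mem_iInter, mem_empty_iff_false, iff_false, not_forall]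
      obtain ⟨n, hn⟩ := exists_nat_gt (g x)
      exact ⟨n, fun hx => absurd hx.2 (not_lt.2 hn.le)⟩
    have htend := tendsto_measure_iInter_atTop (μ := volume) (s := fun n : ℕ => S (n : ℝ))
      (fun n => (hSm _).nullMeasurableSet)
      (fun m n h => hmono _ _ (Nat.cast_le.2 h))
      ⟨0, by exact ne_of_lt (lt_of_le_of_lt (hvle _) ENNReal.one_lt_top)⟩
    rw [hempty, measure_empty] at htend
    have htend1 : Tendsto (fun n : ℕ => volume (S (n:ℝ))) atTop (nhds 1) := by
      have : (fun n : ℕ => volume (S (n:ℝ))) = fun _ => 1 := funext hall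
      rw [this]; exact tendsto_const_nhds
    exact one_ne_zero (tendsto_nhds_unique htend1 htend)
  -- exists lower bound where measure 1
  have hZbdd : ∃ n : ℕ, volume (S (-(n:ℝ))) = 1 := by
    by_contra hno
    push_neg at hno
    have hall : ∀ n : ℕ, volume (S (-(n:ℝ))) = 0 :=
      fun n => (htri _).resolve_right (hno n)
    have hunion : ⋃ n : ℕ, S (-(n : ℝ)) = I := by
      ext x
      simp only [mem_iUnion]
      constructor
      · rintro ⟨n, hn⟩; exact hn.1
      · intro hx
        obtain ⟨n, hn⟩ := exists_nat_gt (-(g x))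
        exact ⟨n, hx, show -(n:ℝ) < g x by linarith⟩
    have htend := tendsto_measure_iUnion_atTop (μ := volume) (s := fun n : ℕ => S (-(n : ℝ)))
      (fun m n h => hmono _ _ (by exact_mod_cast neg_le_neg (Nat.cast_le.2 h)))
    rw [hunion, vol_I01'] at htend
    have htend0 : Tendsto (fun n : ℕ => volume (S (-(n:ℝ)))) atTop (nhds 0) := by
      have : (fun n : ℕ => volume (S (-(n:ℝ)))) = fun _ => 0 := funext hall
      rw [this]; exact tendsto_const_nhds
    exact one_ne_zero (tendsto_nhds_unique htend htend0)
  obtain ⟨n₁, hn₁⟩ := hZbdd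
  set Z := {t : ℝ | volume (S t) = 0} with hZ
  have hZne' : Z.Nonempty := hZne
  have hZbdd' : BddBelow Z := by
    refine ⟨-(n₁:ℝ), fun t ht => ?_⟩
    by_contra hlt
    push_neg at hlt
    have : volume (S (-(n₁:ℝ))) ≤ volume (S t) := measure_mono (hmono t (-(n₁:ℝ)) hlt.le)
    rw [hn₁, ht] at this
    exact absurd this (by simp)
  set c := sInf Z with hc
  -- upper null set
  have hupper : volume (S c) = 0 := by
    have hSc : S c = ⋃ n : ℕ, S (c + 1/((n:ℝ)+1)) := by
      ext x
      simp only [mem_iUnion]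
      constructor
      · intro hx
        have hcx : c < g x := hx.2
        obtain ⟨n, hn⟩ := exists_nat_one_div_lt (show (0:ℝ) < g x - c by linarith)
        exact ⟨n, hx.1, show c + 1/((n:ℝ)+1) < g x by linarith⟩
      · rintro ⟨n, hn⟩
        have h2 : c + 1/((n:ℝ)+1) < g x := hn.2
        have hp : (0:ℝ) < 1/((n:ℝ)+1) := by positivity
        exact ⟨hn.1, show c < g x by linarith⟩
    rw [hSc]
    refine measure_iUnion_null fun n => ?_
    have hlt : c < c + 1/((n:ℝ)+1) := by
      have : (0:ℝ) < 1/((n:ℝ)+1) := by positivity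
      linarith
    obtain ⟨t, htZ, htlt⟩ := exists_lt_of_csInf_lt hZne' hlt
    exact measure_mono_null (hmono t _ htlt.le) htZ
  -- lower null set
  have hlower : volume (I ∩ {x | g x < c}) = 0 := by
    have heq : I ∩ {x | g x < c} = ⋃ n : ℕ, (I \ S (c - 1/((n:ℝ)+1))) := by
      ext x
      simp only [mem_iUnion, mem_inter_iff, mem_setOf_eq, mem_diff]
      constructor
      · rintro ⟨hxI, hxc⟩
        obtain ⟨n, hn⟩ := exists_nat_one_div_lt (show (0:ℝ) < c - g x by linarith)
        refine ⟨n, hxI, fun hx => ?_⟩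
        have h2 : c - 1/((n:ℝ)+1) < g x := hx.2
        linarith
      · rintro ⟨n, hxI, hxn⟩
        refine ⟨hxI, ?_⟩
        have hle : g x ≤ c - 1/((n:ℝ)+1) := by
          by_contra hgt
          exact hxn ⟨hxI, not_le.1 hgt⟩
        have : (0:ℝ) < 1/((n:ℝ)+1) := by positivity
        linarith
    rw [heq]
    refine measure_iUnion_null fun n => ?_
    have hlt : c - 1/((n:ℝ)+1) < c := by
      have : (0:ℝ) < 1/((n:ℝ)+1) := by positivity
      linarith
    have htnotZ : volume (S (c - 1/((n:ℝ)+1))) ≠ 0 := by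
      intro h0'
      exact absurd (csInf_le hZbdd' h0') (not_le.2 hlt)
    have hone : volume (S (c - 1/((n:ℝ)+1))) = 1 := (htri _).resolve_left htnotZ
    have := measure_diff (hSsub _) (hSm _).nullMeasurableSet
      (by rw [hone]; exact ENNReal.one_ne_top)
    rw [this, hone, vol_I01', tsub_self]
  -- conclude
  refine ⟨c, ?_⟩
  have hA : ∀ᵐ x ∂ν, x ∉ S c := by
    rw [← measure_eq_zero_iff_ae_notMem]
    rw [hν, Measure.restrict_apply' measurableSet_Icc]
    exact measure_mono_null inter_subset_left hupper
  have hB : ∀ᵐ x ∂ν, x ∉ I ∩ {x | g x < c} := by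
    rw [← measure_eq_zero_iff_ae_notMem]
    rw [hν, Measure.restrict_apply' measurableSet_Icc]
    exact measure_mono_null inter_subset_left hlower
  filter_upwards [ae_restrict_mem (μ := volume) measurableSet_Icc, hA, hB] with x hxI hxA hxB
  by_contra hgne
  rcases lt_or_gt_of_ne hgne with h | h
  · exact hxB ⟨hxI, h⟩
  · exact hxA ⟨hxI, h⟩


private lemma energy_zero (W : ℝ → ℝ → ℝ)
    (hmeas : Measurable fun p : ℝ × ℝ => W p.1 p.2)
    (hsym : ∀ x y, W x y = W y x)
    (h0 : ∀ x y, 0 ≤ W x y) (h1 : ∀ x y, W x y ≤ 1)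
    (g : ℝ → ℝ) (hg : Measurable g)
    (hg2 : MemLp g 2 (volume.restrict (Set.Icc (0:ℝ) 1)))
    (hker : ∀ᵐ x ∂(volume.restrict (Set.Icc (0:ℝ) 1)),
      (∫ y in Set.Icc (0:ℝ) 1, W x y) * g x - ∫ y in Set.Icc (0:ℝ) 1, W x y * g y = 0) :
    ∀ᵐ p ∂((volume.restrict (Set.Icc (0:ℝ) 1)).prod (volume.restrict (Set.Icc (0:ℝ) 1))),
      W p.1 p.2 * (g p.1 - g p.2)^2 = 0 := by
  set ν := volume.restrict (Set.Icc (0:ℝ) 1) with hν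
  haveI : IsFiniteMeasure ν := finite_restrict' (le_refl _)
  set P := ν.prod ν with hP
  have hgi : Integrable g ν := hg2.integrable one_le_two
  have hgsq : Integrable (fun x => g x ^ 2) ν := hg2.integrable_sq
  have hsq1 : Integrable (fun p : ℝ × ℝ => g p.1 ^ 2) P := by
    simpa using hgsq.mul_prod (integrable_const (1:ℝ))
  have hsq2 : Integrable (fun p : ℝ × ℝ => g p.2 ^ 2) P := by
    simpa using (integrable_const (1:ℝ)).mul_prod hgsq
  have hmul : Integrable (fun p : ℝ × ℝ => g p.1 * g p.2) P := hgi.mul_prod hgi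
  have hWm : Measurable (fun p : ℝ × ℝ => W p.1 p.2) := hmeas
  have hg1m : Measurable (fun p : ℝ × ℝ => g p.1) := hg.comp measurable_fst
  have hg2m : Measurable (fun p : ℝ × ℝ => g p.2) := hg.comp measurable_snd
  have hWb : ∀ p : ℝ × ℝ, |W p.1 p.2| ≤ 1 := fun p => abs_le.2 ⟨by linarith [h0 p.1 p.2], h1 p.1 p.2⟩
  -- integrable pieces
  have hF1 : Integrable (fun p : ℝ × ℝ => W p.1 p.2 * g p.1 ^ 2) P := by
    refine hsq1.mono' ((hWm.mul (hg1m.pow_const 2)).aestronglyMeasurable) ?_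
    filter_upwards with p
    rw [Real.norm_eq_abs, abs_mul, abs_pow, sq_abs]
    calc |W p.1 p.2| * g p.1 ^ 2 ≤ 1 * g p.1 ^ 2 :=
          mul_le_mul_of_nonneg_right (hWb p) (sq_nonneg _)
      _ = g p.1 ^ 2 := one_mul _
  have hF2 : Integrable (fun p : ℝ × ℝ => W p.1 p.2 * g p.2 ^ 2) P := by
    refine hsq2.mono' ((hWm.mul (hg2m.pow_const 2)).aestronglyMeasurable) ?_
    filter_upwards with p
    rw [Real.norm_eq_abs, abs_mul, abs_pow, sq_abs]
    calc |W p.1 p.2| * g p.2 ^ 2 ≤ 1 * g p.2 ^ 2 :=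
          mul_le_mul_of_nonneg_right (hWb p) (sq_nonneg _)
      _ = g p.2 ^ 2 := one_mul _
  have hF3 : Integrable (fun p : ℝ × ℝ => W p.1 p.2 * (g p.1 * g p.2)) P := by
    refine hmul.abs.mono' ((hWm.mul (hg1m.mul hg2m)).aestronglyMeasurable) ?_
    filter_upwards with p
    rw [Real.norm_eq_abs, abs_mul]
    have := mul_le_mul_of_nonneg_right (hWb p) (abs_nonneg (g p.1 * g p.2))
    simpa using this
  have hFint : Integrable (fun p : ℝ × ℝ => W p.1 p.2 * (g p.1 - g p.2) ^ 2) P := by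
    have : (fun p : ℝ × ℝ => W p.1 p.2 * (g p.1 - g p.2) ^ 2)
        = fun p => W p.1 p.2 * g p.1 ^ 2 + W p.1 p.2 * g p.2 ^ 2
            - 2 * (W p.1 p.2 * (g p.1 * g p.2)) := by
      funext p; ring
    rw [this]
    exact (hF1.add hF2).sub (hF3.const_mul 2)
  -- ∫ F2 = ∫ F1 by swap
  have hswap : ∫ p, W p.1 p.2 * g p.2 ^ 2 ∂P = ∫ p, W p.1 p.2 * g p.1 ^ 2 ∂P := by
    rw [← integral_prod_swap (fun p : ℝ × ℝ => W p.1 p.2 * g p.1 ^ 2)]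
    congr 1
    funext p
    simp only [Prod.fst_swap, Prod.snd_swap]
    rw [hsym]
  -- ∫ F1 = ∫ F3 via kernel equation
  have hker' : ∀ᵐ x ∂ν, (∫ y, W x y ∂ν) * g x ^ 2 = g x * ∫ y, W x y * g y ∂ν := by
    filter_upwards [hker] with x hx
    have : (∫ y, W x y ∂ν) * g x = ∫ y, W x y * g y ∂ν := by linarith
    calc (∫ y, W x y ∂ν) * g x ^ 2 = ((∫ y, W x y ∂ν) * g x) * g x := by ring
      _ = (∫ y, W x y * g y ∂ν) * g x := by rw [this]
      _ = g x * ∫ y, W x y * g y ∂ν := mul_comm _ _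
  have h13 : ∫ p, W p.1 p.2 * g p.1 ^ 2 ∂P = ∫ p, W p.1 p.2 * (g p.1 * g p.2) ∂P := by
    rw [integral_prod _ hF1, integral_prod _ hF3]
    refine integral_congr_ae ?_
    filter_upwards [hker'] with x hx
    rw [integral_mul_const, hx, ← integral_const_mul]
    congr 1; funext y; ring
  -- total
  have hEzero : ∫ p, W p.1 p.2 * (g p.1 - g p.2) ^ 2 ∂P = 0 := by
    have hrw : (fun p : ℝ × ℝ => W p.1 p.2 * (g p.1 - g p.2) ^ 2)
        = fun p => W p.1 p.2 * g p.1 ^ 2 + W p.1 p.2 * g p.2 ^ 2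
            - 2 * (W p.1 p.2 * (g p.1 * g p.2)) := by
      funext p; ring
    have hadd : Integrable (fun p : ℝ × ℝ => W p.1 p.2 * g p.1 ^ 2 + W p.1 p.2 * g p.2 ^ 2) P := by
      exact hF1.add hF2
    have hc : Integrable (fun p : ℝ × ℝ => 2 * (W p.1 p.2 * (g p.1 * g p.2))) P := by
      exact hF3.const_mul 2
    rw [hrw]
    rw [integral_sub hadd hc]
    have hadd' : ∫ p, (W p.1 p.2 * g p.1 ^ 2 + W p.1 p.2 * g p.2 ^ 2) ∂P
        = (∫ p, W p.1 p.2 * g p.1 ^ 2 ∂P) + ∫ p, W p.1 p.2 * g p.2 ^ 2 ∂P := by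
      exact integral_add hF1 hF2
    rw [hadd', integral_const_mul, hswap, h13]
    ring
  have := (integral_eq_zero_iff_of_nonneg
    (fun p : ℝ × ℝ => mul_nonneg (h0 p.1 p.2) (sq_nonneg _)) hFint).1 hEzero
  filter_upwards [this] with p hp
  simpa using hp

end Aux

/-- For a connected graphon `W`, the kernel of the combinatorial Laplacian
`(ℒf)(x) = k(x) f(x) − ∫ W(x,y) f(y) dy` (with `k(x) = ∫ W(x,y) dy`) is one-dimensional:
any `f ∈ L²[0,1]` with `ℒf = 0` a.e. is a.e. equal to a constant. -/
theorem stmt_4 (W : ℝ → ℝ → ℝ)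
    (hmeas : Measurable fun p : ℝ × ℝ => W p.1 p.2)
    (hsym : ∀ x y, W x y = W y x)
    (h0 : ∀ x y, 0 ≤ W x y) (h1 : ∀ x y, W x y ≤ 1)
    (hconn : GraphonConnected W)
    (f : ℝ → ℝ)
    (hf : MemLp f 2 (volume.restrict (Set.Icc (0:ℝ) 1)))
    (hker : ∀ᵐ x ∂(volume.restrict (Set.Icc (0:ℝ) 1)),
      (∫ y in Set.Icc (0:ℝ) 1, W x y) * f x - ∫ y in Set.Icc (0:ℝ) 1, W x y * f y = 0) :
    ∃ c : ℝ, ∀ᵐ x ∂(volume.restrict (Set.Icc (0:ℝ) 1)), f x = c := by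
  haveI : IsFiniteMeasure (volume.restrict (Set.Icc (0:ℝ) 1)) := finite_restrict' (le_refl _)
  set g : ℝ → ℝ := hf.aestronglyMeasurable.mk f with hgdef
  have hgm : Measurable g := hf.aestronglyMeasurable.stronglyMeasurable_mk.measurable
  have hfg : f =ᶠ[ae (volume.restrict (Set.Icc (0:ℝ) 1))] g := hf.aestronglyMeasurable.ae_eq_mk
  have hg2 : MemLp g 2 (volume.restrict (Set.Icc (0:ℝ) 1)) := hf.ae_eq hfg
  have hker' : ∀ᵐ x ∂(volume.restrict (Set.Icc (0:ℝ) 1)),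
      (∫ y in Set.Icc (0:ℝ) 1, W x y) * g x - ∫ y in Set.Icc (0:ℝ) 1, W x y * g y = 0 := by
    filter_upwards [hker, hfg] with x hx hfx
    have hint : (∫ y in Set.Icc (0:ℝ) 1, W x y * f y)
        = ∫ y in Set.Icc (0:ℝ) 1, W x y * g y := by
      refine integral_congr_ae ?_
      filter_upwards [hfg] with y hy
      rw [hy]
    rw [← hfx, ← hint]
    exact hx
  have hE := energy_zero W hmeas hsym h0 h1 g hgm hg2 hker'
  obtain ⟨c, hc⟩ := const_of_energy W hmeas h0 h1 hconn g hgm hE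
  refine ⟨c, ?_⟩
  filter_upwards [hc, hfg] with x h1x h2x
  rw [h2x]
  exact h1x
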